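/- arXiv:2510.02406 — 2 statements merged into one kernel-verified Lean document; each statement's English description precedes it below -/
import Mathlib

section
/- Let (X,d) be a complete metric space with A, B ⊆ X such that A₀ is nonempty and closed. If T : A → B is a proximal contraction of the first kind (with constant α ∈ [0,1)) satisfying T(A₀) ⊆ B₀, then there exists a unique x* ∈ A with d(x*, Tx*) = d(A,B), and any sequence (xₙ) in A with d(xₙ₊₁, Txₙ) = d(A,B) for all n converges to x*. -/
open Filter Topology Set

/-- A Geraghty function: maps `[0,∞)` into `[0,1)` and `β(tₙ) → 1` forces `tₙ → 0`. -/
def GeraghtyFn (β : ℝ → ℝ) : Prop :=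
  (∀ t : ℝ, 0 ≤ t → 0 ≤ β t ∧ β t < 1) ∧
  ∀ t : ℕ → ℝ, (∀ n, 0 ≤ t n) →
    Tendsto (fun n => β (t n)) atTop (𝓝 1) → Tendsto t atTop (𝓝 0)

/-- `setDist A B = inf {d(a,b) : a ∈ A, b ∈ B}`. -/
noncomputable def setDist {X : Type*} [MetricSpace X] (A B : Set X) : ℝ :=
  sInf ((fun p : X × X => dist p.1 p.2) '' A ×ˢ B)

/-- `A₀`, the best proximity subset of `A`. -/
def proxA {X : Type*} [MetricSpace X] (A B : Set X) : Set X :=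
  {x ∈ A | ∃ y ∈ B, dist x y = setDist A B}

/-- `B₀`, the best proximity subset of `B`. -/
def proxB {X : Type*} [MetricSpace X] (A B : Set X) : Set X :=
  {y ∈ B | ∃ x ∈ A, dist x y = setDist A B}

/-- Best proximity point theorem for proximal contractions of the first kind. -/
theorem proximal_contraction_best_proximity {X : Type*} [MetricSpace X] [CompleteSpace X]
    (A B : Set X) (hA : A.Nonempty) (hB : B.Nonempty)
    (hA0ne : (proxA A B).Nonempty) (hA0cl : IsClosed (proxA A B))
    (T : X → X) (hTAB : MapsTo T A B)
    (α : ℝ) (hα0 : 0 ≤ α) (hα1 : α < 1)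
    (hprox : ∀ u₁ u₂ x₁ x₂, u₁ ∈ A → u₂ ∈ A → x₁ ∈ A → x₂ ∈ A →
      dist u₁ (T x₁) = setDist A B → dist u₂ (T x₂) = setDist A B →
      dist u₁ u₂ ≤ α * dist x₁ x₂)
    (hT0 : MapsTo T (proxA A B) (proxB A B)) :
    ∃ x ∈ A, dist x (T x) = setDist A B ∧
      (∀ y ∈ A, dist y (T y) = setDist A B → y = x) ∧
      ∀ s : ℕ → X, (∀ n, s n ∈ A) →
        (∀ n, dist (s (n+1)) (T (s n)) = setDist A B) →
        Tendsto s atTop (𝓝 x) := by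
  classical
  set d := setDist A B with hd
  -- step function
  have key : ∀ x, x ∈ proxA A B → ∃ u, u ∈ proxA A B ∧ dist u (T x) = d := by
    intro x hx
    obtain ⟨hTxB, u, huA, hud⟩ := hT0 hx
    exact ⟨u, ⟨huA, T x, hTxB, hud⟩, hud⟩
  choose! step h1 h2 using key
  set seq : ℕ → X := fun n => Nat.rec hA0ne.choose (fun _ ih => step ih) n with hseq
  have hmem : ∀ n, seq n ∈ proxA A B := by
    intro n
    induction n with
    | zero => exact hA0ne.choose_spec
    | succ n ih => exact h1 _ ih
  have hmemA : ∀ n, seq n ∈ A := fun n => (hmem n).1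
  have hstep : ∀ n, dist (seq (n+1)) (T (seq n)) = d := fun n => h2 _ (hmem n)
  have hcontr : ∀ n, dist (seq (n+1)) (seq (n+2)) ≤ α * dist (seq n) (seq (n+1)) := by
    intro n
    exact hprox _ _ _ _ (hmemA (n+1)) (hmemA (n+2)) (hmemA n) (hmemA (n+1))
      (hstep n) (hstep (n+1))
  have hgeom : ∀ n, dist (seq n) (seq (n+1)) ≤ dist (seq 0) (seq 1) * α ^ n := by
    intro n
    induction n with
    | zero => simp
    | succ n ih =>
      calc dist (seq (n+1)) (seq (n+2)) ≤ α * dist (seq n) (seq (n+1)) := hcontr n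
        _ ≤ α * (dist (seq 0) (seq 1) * α ^ n) := by
            exact mul_le_mul_of_nonneg_left ih hα0
        _ = dist (seq 0) (seq 1) * α ^ (n+1) := by ring
  have hcauchy : CauchySeq seq := cauchySeq_of_le_geometric α _ hα1 hgeom
  obtain ⟨x, hxlim⟩ := cauchySeq_tendsto_of_complete hcauchy
  have hxA0 : x ∈ proxA A B := hA0cl.mem_of_tendsto hxlim (Filter.Eventually.of_forall hmem)
  have hxA : x ∈ A := hxA0.1
  obtain ⟨hTxB, z, hzA, hzd⟩ := hT0 hxA0
  -- show z = x
  have hdz : ∀ n, dist (seq (n+1)) z ≤ α * dist (seq n) x := by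
    intro n
    exact hprox _ _ _ _ (hmemA (n+1)) hzA (hmemA n) hxA (hstep n) hzd
  have hdistx : Tendsto (fun n => dist (seq n) x) atTop (𝓝 0) :=
    tendsto_iff_dist_tendsto_zero.mp hxlim
  have hlimz : Tendsto (fun n => seq (n+1)) atTop (𝓝 z) := by
    rw [tendsto_iff_dist_tendsto_zero]
    apply squeeze_zero (fun n => dist_nonneg) hdz
    have : Tendsto (fun n => α * dist (seq n) x) atTop (𝓝 (α * 0)) :=
      hdistx.const_mul α
    simpa using this
  have hlimx : Tendsto (fun n => seq (n+1)) atTop (𝓝 x) :=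
    hxlim.comp (tendsto_add_atTop_nat 1)
  have hzx : z = x := tendsto_nhds_unique hlimz hlimx
  have hbest : dist x (T x) = d := hzx ▸ hzd
  refine ⟨x, hxA, hbest, ?_, ?_⟩
  · intro y hyA hyd
    have h := hprox y x y x hyA hxA hyA hxA hyd hbest
    have h0 : (0:ℝ) ≤ dist y x := dist_nonneg
    have : dist y x = 0 := by nlinarith
    exact dist_eq_zero.mp this
  · intro s hsA hsd
    have hrec : ∀ n, dist (s (n+1)) x ≤ α * dist (s n) x := by
      intro n
      exact hprox _ _ _ _ (hsA (n+1)) hxA (hsA n) hxA (hsd n) hbest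
    have hbound : ∀ n, dist (s n) x ≤ dist (s 0) x * α ^ n := by
      intro n
      induction n with
      | zero => simp
      | succ n ih =>
        calc dist (s (n+1)) x ≤ α * dist (s n) x := hrec n
          _ ≤ α * (dist (s 0) x * α ^ n) := mul_le_mul_of_nonneg_left ih hα0
          _ = dist (s 0) x * α ^ (n+1) := by ring
    rw [tendsto_iff_dist_tendsto_zero]
    apply squeeze_zero (fun n => dist_nonneg) hbound
    have : Tendsto (fun n => dist (s 0) x * α ^ n) atTop (𝓝 (dist (s 0) x * 0)) :=
      (tendsto_pow_atTop_nhds_zero_of_lt_one hα0 hα1).const_mul _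
    simpa using this
end

section
/- Under the hypotheses of the extended proximal Geraghty theorem (S auxiliary, continuous, injective, subsequentially convergent with S(A₀) ⊆ A₀, S(B₀) ⊆ B₀; T : A → B with T(A₀) ⊆ B₀ satisfying the S-proximal Geraghty condition with Geraghty function β), any sequence (xₙ) in A₀ satisfying d(Sxₙ₊₁, STxₙ) = d(A,B) for all n has the property that (Sxₙ) is a Cauchy sequence in X. -/
open Filter Topology Set

/-- In the extended proximal Geraghty setting, proximal iterates have Cauchy `S`-images. -/
theorem extended_proximal_geraghty_cauchy {X : Type*} [MetricSpace X] [CompleteSpace X]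
    (A B : Set X) (hA : A.Nonempty) (hB : B.Nonempty)
    (hA0ne : (proxA A B).Nonempty) (hA0cl : IsClosed (proxA A B))
    (hB0ne : (proxB A B).Nonempty) (hB0cl : IsClosed (proxB A B))
    (S : X → X) (hSmaps : MapsTo S (A ∪ B) (A ∪ B))
    (hScont : ContinuousOn S (A ∪ B)) (hSinj : InjOn S (A ∪ B))
    (hSsub : ∀ x : ℕ → X, (∀ n, x n ∈ A ∪ B) →
      (∃ L, Tendsto (fun n => S (x n)) atTop (𝓝 L)) →
      ∃ φ : ℕ → ℕ, StrictMono φ ∧ ∃ l ∈ A ∪ B, Tendsto (fun k => x (φ k)) atTop (𝓝 l))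
    (hSA0 : MapsTo S (proxA A B) (proxA A B)) (hSB0 : MapsTo S (proxB A B) (proxB A B))
    (T : X → X) (hTAB : MapsTo T A B) (hT0 : MapsTo T (proxA A B) (proxB A B))
    (β : ℝ → ℝ) (hβ : GeraghtyFn β)
    (hger : ∀ u v x y, u ∈ A → v ∈ A → x ∈ A → y ∈ A →
      dist (S u) (S (T x)) = setDist A B → dist (S v) (S (T y)) = setDist A B →
      dist (S u) (S v) ≤ β (dist (S x) (S y)) * dist (S x) (S y))
    (x : ℕ → X) (hx : ∀ n, x n ∈ proxA A B)
    (hiter : ∀ n, dist (S (x (n+1))) (S (T (x n))) = setDist A B) :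
    CauchySeq (fun n => S (x n)) := by
  classical
  obtain ⟨hβ1, hβ2⟩ := hβ
  set s : ℕ → X := fun n => S (x n) with hs
  have hxA : ∀ n, x n ∈ A := fun n => (hx n).1
  have key : ∀ m n : ℕ, dist (s (m+1)) (s (n+1)) ≤ β (dist (s m) (s n)) * dist (s m) (s n) :=
    fun m n => hger (x (m+1)) (x (n+1)) (x m) (x n) (hxA _) (hxA _) (hxA _) (hxA _)
      (hiter m) (hiter n)
  set d : ℕ → ℝ := fun n => dist (s n) (s (n+1)) with hd
  have hdnn : ∀ n, 0 ≤ d n := fun n => dist_nonneg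
  have hstep : ∀ n, d (n+1) ≤ β (d n) * d n := fun n => key n (n+1)
  have hdec : ∀ n, d (n+1) ≤ d n := by
    intro n
    calc d (n+1) ≤ β (d n) * d n := hstep n
      _ ≤ 1 * d n := mul_le_mul_of_nonneg_right (hβ1 _ (hdnn n)).2.le (hdnn n)
      _ = d n := one_mul _
  have hanti : Antitone d := antitone_nat_of_succ_le hdec
  have hbdd : BddBelow (Set.range d) := ⟨0, fun y ⟨n, hn⟩ => hn ▸ hdnn n⟩
  have hr : Tendsto d atTop (𝓝 (⨅ n, d n)) := tendsto_atTop_ciInf hanti hbdd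
  have hrnn : 0 ≤ ⨅ n, d n := le_ciInf hdnn
  have hd0 : Tendsto d atTop (𝓝 0) := by
    rcases eq_or_lt_of_le hrnn with h | h
    · rwa [← h] at hr
    · have hdr : ∀ n, (⨅ m, d m) ≤ d n := fun n => ciInf_le hbdd n
      have hdpos : ∀ n, 0 < d n := fun n => lt_of_lt_of_le h (hdr n)
      have hquot : Tendsto (fun n => d (n+1) / d n) atTop (𝓝 1) := by
        have h1 : Tendsto (fun n => d (n+1)) atTop (𝓝 (⨅ n, d n)) :=
          hr.comp (tendsto_add_atTop_nat 1)
        have h2 := h1.div hr (ne_of_gt h)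
        rw [div_self (ne_of_gt h)] at h2; exact h2
      have hβlim : Tendsto (fun n => β (d n)) atTop (𝓝 1) := by
        refine tendsto_of_tendsto_of_tendsto_of_le_of_le hquot tendsto_const_nhds ?_ ?_
        · intro n
          exact (div_le_iff₀ (hdpos n)).mpr (hstep n)
        · intro n; exact (hβ1 _ (hdnn n)).2.le
      have h0 := hβ2 d hdnn hβlim
      exact absurd (tendsto_nhds_unique hr h0) (ne_of_gt h)
  rw [Metric.cauchySeq_iff]
  by_contra hcon
  push_neg at hcon
  obtain ⟨ε, hε, hcon⟩ := hcon
  have hex : ∀ k : ℕ, ∃ q : ℕ, k ≤ q ∧ ∃ m, q < m ∧ ε ≤ dist (s m) (s q) := by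
    intro k
    obtain ⟨m, hm, n, hn, hmn⟩ := hcon k
    rcases lt_trichotomy m n with h | h | h
    · exact ⟨m, hm, n, h, by rwa [dist_comm]⟩
    · exfalso; rw [h, dist_self] at hmn; linarith
    · exact ⟨n, hn, m, h, hmn⟩
  choose N hNk M' hM'lt hM'dist using hex
  have hPex : ∀ k, ∃ m, N k < m ∧ ε ≤ dist (s m) (s (N k)) :=
    fun k => ⟨M' k, hM'lt k, hM'dist k⟩
  set M : ℕ → ℕ := fun k => Nat.find (hPex k) with hM
  have hMspec : ∀ k, N k < M k ∧ ε ≤ dist (s (M k)) (s (N k)) := fun k => Nat.find_spec (hPex k)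
  have hMpos : ∀ k, 0 < M k := fun k => Nat.lt_of_le_of_lt (Nat.zero_le _) (hMspec k).1
  have hMk1 : ∀ k, M k - 1 + 1 = M k := fun k => Nat.succ_pred_eq_of_pos (hMpos k)
  have hNM1 : ∀ k, N k ≤ M k - 1 := fun k => Nat.le_sub_one_of_lt (hMspec k).1
  have hMmin : ∀ k, dist (s (M k - 1)) (s (N k)) < ε := by
    intro k
    rcases eq_or_lt_of_le (hNM1 k) with h | h
    · rw [← h, dist_self]; exact hε
    · have hlt : M k - 1 < M k := Nat.sub_lt (hMpos k) one_pos
      have hmin := Nat.find_min (hPex k) hlt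
      by_contra hc
      exact hmin ⟨h, not_lt.mp hc⟩
  set t : ℕ → ℝ := fun k => dist (s (M k)) (s (N k)) with ht
  have hεt : ∀ k, ε ≤ t k := fun k => (hMspec k).2
  have htpos : ∀ k, 0 < t k := fun k => lt_of_lt_of_le hε (hεt k)
  have htnn : ∀ k, 0 ≤ t k := fun k => (htpos k).le
  have hdMk1 : ∀ k, d (M k - 1) ≤ d k := fun k =>
    hanti (le_trans (hNk k) (hNM1 k))
  have hdMk : ∀ k, d (M k) ≤ d k := fun k =>
    hanti (le_trans (hNk k) (hMspec k).1.le)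
  have hdNk : ∀ k, d (N k) ≤ d k := fun k => hanti (hNk k)
  have htub : ∀ k, t k ≤ ε + d k := by
    intro k
    have h2 : dist (s (M k)) (s (M k - 1)) = d (M k - 1) := by
      simp only [hd]
      rw [hMk1 k, dist_comm]
    have h1 : t k ≤ d (M k - 1) + dist (s (M k - 1)) (s (N k)) := by
      have h3 := dist_triangle (s (M k)) (s (M k - 1)) (s (N k))
      rw [h2] at h3
      exact h3
    have := hMmin k
    have := hdMk1 k
    simp only [ht]
    linarith [h1]
  have htlim : Tendsto t atTop (𝓝 ε) := by
    have hub : Tendsto (fun k => ε + d k) atTop (𝓝 ε) := by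
      simpa using tendsto_const_nhds.add hd0
    exact tendsto_of_tendsto_of_tendsto_of_le_of_le tendsto_const_nhds hub hεt htub
  have hkey2 : ∀ k, t k - 2 * d k ≤ β (t k) * t k := by
    intro k
    have h1 : dist (s (M k + 1)) (s (N k + 1)) ≤ β (t k) * t k := key (M k) (N k)
    have h2 : t k ≤ dist (s (M k)) (s (M k + 1)) + dist (s (M k + 1)) (s (N k + 1))
        + dist (s (N k + 1)) (s (N k)) := dist_triangle4 _ _ _ _
    have h3 : dist (s (M k)) (s (M k + 1)) = d (M k) := rfl
    have h4 : dist (s (N k + 1)) (s (N k)) = d (N k) := dist_comm _ _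
    rw [h3, h4] at h2
    have := hdMk k
    have := hdNk k
    linarith
  have hβlow : ∀ k, 1 - 2 * d k / ε ≤ β (t k) := by
    intro k
    have h1 : (t k - 2 * d k) / t k ≤ β (t k) := (div_le_iff₀ (htpos k)).mpr (hkey2 k)
    have h2 : 2 * d k / t k ≤ 2 * d k / ε :=
      div_le_div_of_nonneg_left (by linarith [hdnn k]) hε (hεt k)
    have h3 : (t k - 2 * d k) / t k = 1 - 2 * d k / t k := by
      rw [sub_div, div_self (ne_of_gt (htpos k))]
    linarith [h1, h2, h3 ▸ h1]
  have hlow : Tendsto (fun k => 1 - 2 * d k / ε) atTop (𝓝 1) := by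
    have h1 : Tendsto (fun k => 2 * d k / ε) atTop (𝓝 0) := by
      have := (hd0.const_mul 2).div_const ε
      simpa using this
    simpa using tendsto_const_nhds.sub h1
  have hβt : Tendsto (fun k => β (t k)) atTop (𝓝 1) :=
    tendsto_of_tendsto_of_tendsto_of_le_of_le hlow tendsto_const_nhds hβlow
      (fun k => (hβ1 _ (htnn k)).2.le)
  have ht0 : Tendsto t atTop (𝓝 0) := hβ2 t htnn hβt
  have hfin : ε ≤ 0 := ge_of_tendsto' ht0 hεt
  linarith
end
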